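/- Let n ≥ 2 and let κ = (κ_1,…,κ_n) ∈ K_2 be ordered decreasingly, κ_1 ≥ κ_2 ≥ ⋯ ≥ κ_n. Then S_2(κ)/S_1(κ) ≤ S_1(κ) − κ_1 ≤ ((n−1)/n)·S_1(κ). -/
import Mathlib


open Finset

/-- The `k`-th elementary symmetric polynomial of `x ∈ ℝ^m`. -/
noncomputable def esymm {m : ℕ} (k : ℕ) (x : Fin m → ℝ) : ℝ :=
  ∑ t ∈ Finset.powersetCard k (Finset.univ : Finset (Fin m)), ∏ i ∈ t, x i

lemma key_sq {ι : Type*} [DecidableEq ι] (s : Finset ι) (f : ι → ℝ) :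
    (∑ i ∈ s, f i) ^ 2 =
      ∑ i ∈ s, f i ^ 2 + 2 * ∑ t ∈ s.powersetCard 2, ∏ i ∈ t, f i := by
  induction s using Finset.cons_induction with
  | empty =>
    have he : Finset.powersetCard 2 (∅ : Finset ι) = ∅ :=
      Finset.powersetCard_eq_empty.2 (by simp)
    simp [he]
  | cons a s ha ih =>
    rw [Finset.cons_eq_insert, Finset.sum_insert ha, Finset.sum_insert ha,
      show (2 : ℕ) = Nat.succ 1 from rfl, Finset.powersetCard_succ_insert ha]
    rw [Finset.sum_union, Finset.sum_image]
    · have h1 : ∀ t ∈ s.powersetCard 1, ∏ i ∈ insert a t, f i = f a * ∏ i ∈ t, f i := by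
        intro t ht
        rw [Finset.prod_insert]
        intro hat
        exact ha ((Finset.mem_powersetCard.1 ht).1 hat)
      rw [Finset.sum_congr rfl h1, ← Finset.mul_sum]
      have h2 : ∑ t ∈ s.powersetCard 1, ∏ i ∈ t, f i = ∑ i ∈ s, f i := by
        rw [Finset.powersetCard_one, Finset.sum_map]; simp
      rw [h2]; ring_nf; nlinarith [ih]
    · intro t1 ht1 t2 ht2 h
      have h1 := (Finset.mem_powersetCard.1 ht1).1
      have h2 := (Finset.mem_powersetCard.1 ht2).1
      have e1 : a ∉ t1 := fun h' => ha (h1 h')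
      have e2 : a ∉ t2 := fun h' => ha (h2 h')
      rw [← Finset.erase_insert e1, ← Finset.erase_insert e2, h]
    · rw [Finset.disjoint_right]
      intro t ht ht'
      obtain ⟨u, hu, rfl⟩ := Finset.mem_image.1 ht
      exact ha ((Finset.mem_powersetCard.1 ht').1 (Finset.mem_insert_self a u))

theorem stmt_2 (n : ℕ) (hn : 2 ≤ n) (κ : Fin n → ℝ)
    (hord : ∀ i j : Fin n, i ≤ j → κ j ≤ κ i)
    (h1 : 0 < esymm 1 κ) (h2 : 0 < esymm 2 κ) :
    esymm 2 κ / esymm 1 κ ≤ esymm 1 κ - κ ⟨0, by omega⟩ ∧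
    esymm 1 κ - κ ⟨0, by omega⟩ ≤ (((n : ℝ) - 1) / n) * esymm 1 κ := by
  have hE1 : esymm 1 κ = ∑ i, κ i := by
    simp [esymm, Finset.powersetCard_one, Finset.sum_map]
  have hkey := key_sq (Finset.univ : Finset (Fin n)) κ
  rw [show ∑ t ∈ Finset.powersetCard 2 Finset.univ, ∏ i ∈ t, κ i = esymm 2 κ from rfl] at hkey
  set a := κ ⟨0, by omega⟩ with ha
  have hmax : ∀ i : Fin n, κ i ≤ a := fun i => hord ⟨0, by omega⟩ i (Fin.mk_le_of_le_val (Nat.zero_le _))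
  have hsqle : a ^ 2 ≤ ∑ i, κ i ^ 2 :=
    Finset.single_le_sum (fun i _ => sq_nonneg (κ i)) (Finset.mem_univ _)
  have hS : ∑ i, κ i ≤ n * a := by
    calc ∑ i, κ i ≤ ∑ _i : Fin n, a := Finset.sum_le_sum fun i _ => hmax i
    _ = n * a := by simp [mul_comm]
  have hn' : (0 : ℝ) < n := by positivity
  constructor
  · rw [div_le_iff₀ h1, hE1] at *
    nlinarith [sq_nonneg (∑ i, κ i - a)]
  · rw [hE1, div_mul_eq_mul_div, le_div_iff₀ hn']
    nlinarith [hS]
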